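/- Let x_1, ..., x_N be distinct variables and q ≠ 0. Then the generating function identity Σ_{k≥0} m_k^{(q)}(x) z^{k+1} = 1/q - (1/q)·exp( Σ_{k≥1} (p_k(x_1,...,x_N) - p_k(x_1+q,...,x_N+q)) z^k / k ) holds as formal power series in z, where p_k denotes the k-th power sum and m_k^{(q)}(x) = Σ_i (∏_{j≠i}(x_i - x_j - q)/(x_i - x_j)) x_i^k. -/

import Mathlib

open Finset PowerSeries

/-- Exponential of a formal power series (with zero constant term):
`exp f = Σ_k f^k / k!`, coefficientwise a finite sum. -/
noncomputable def expPS (f : PowerSeries ℝ) : PowerSeries ℝ :=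
  PowerSeries.mk fun n =>
    ∑ k ∈ Finset.range (n + 1), PowerSeries.coeff n (f ^ k) / (Nat.factorial k : ℝ)


open Polynomial in

lemma key1 (N : ℕ) (x : Fin N → ℝ) (hx : Function.Injective x) (q : ℝ) (t : ℝ) :
    (∏ j, (t - x j)) - ∏ j, (t - x j - q) =
      q * ∑ i, (∏ j ∈ Finset.univ.erase i, (x i - x j - q) / (x i - x j)) *
        ∏ j ∈ Finset.univ.erase i, (t - x j) := by
  rcases Nat.eq_zero_or_pos N with hN | hN
  · subst hN; simp
  set c : Fin N → ℝ := fun i => ∏ j ∈ Finset.univ.erase i, (x i - x j - q) / (x i - x j) with hc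
  have hci : ∀ i, c i * ∏ j ∈ Finset.univ.erase i, (x i - x j) =
      ∏ j ∈ Finset.univ.erase i, (x i - x j - q) := by
    intro i
    rw [hc, ← Finset.prod_mul_distrib]
    refine Finset.prod_congr rfl fun j hj => ?_
    have : x i - x j ≠ 0 := by
      have hji : j ≠ i := Finset.ne_of_mem_erase hj
      exact sub_ne_zero.mpr fun h => hji (hx h).symm
    field_simp
  set P : Polynomial ℝ := (∏ j, (Polynomial.X - Polynomial.C (x j))) - (∏ j, (Polynomial.X - Polynomial.C (x j + q)))
      - Polynomial.C q * ∑ i, Polynomial.C (c i) * ∏ j ∈ Finset.univ.erase i, (Polynomial.X - Polynomial.C (x j)) with hP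
  have hPeval : ∀ i, P.eval (x i) = 0 := by
    intro i
    have h1 : (∏ j, (Polynomial.X - Polynomial.C (x j))).eval (x i) = 0 := by
      rw [eval_prod]
      exact Finset.prod_eq_zero (Finset.mem_univ i) (by simp)
    have h2 : (∏ j, (Polynomial.X - Polynomial.C (x j + q))).eval (x i)
        = -q * ∏ j ∈ Finset.univ.erase i, (x i - x j - q) := by
      rw [eval_prod]
      simp only [eval_sub, eval_X, eval_C, sub_add_eq_sub_sub]
      rw [← Finset.mul_prod_erase _ (fun j => x i - x j - q) (Finset.mem_univ i), sub_self,
        zero_sub]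
    have h3 : (∑ k, Polynomial.C (c k) * ∏ j ∈ Finset.univ.erase k, (Polynomial.X - Polynomial.C (x j))).eval (x i)
        = ∏ j ∈ Finset.univ.erase i, (x i - x j - q) := by
      rw [eval_finset_sum, Finset.sum_eq_single i]
      · simp only [eval_mul, eval_C, eval_prod, eval_sub, eval_X]
        exact hci i
      · intro k _ hk
        simp only [eval_mul, eval_C, eval_prod, eval_sub, eval_X]
        rw [Finset.prod_eq_zero (Finset.mem_erase.mpr ⟨Ne.symm hk, Finset.mem_univ i⟩)
          (sub_self (x i)), mul_zero]
      · intro h; exact absurd (Finset.mem_univ i) h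
    simp only [hP, eval_sub, eval_mul, eval_C, h1, h2, h3]
    ring
  have hP0 : P = 0 := by
    by_contra hz
    have hdeg1 : (∏ j, (Polynomial.X - Polynomial.C (x j)) : ℝ[X]).degree = (N : ℕ) := by
      rw [degree_prod]
      simp [degree_X_sub_C]
    have hdeg2 : (∏ j, (Polynomial.X - Polynomial.C (x j + q)) : ℝ[X]).degree = (N : ℕ) := by
      rw [degree_prod, Finset.sum_congr rfl fun j _ => degree_X_sub_C (x j + q)]
      simp
    have hm1 : (∏ j, (Polynomial.X - Polynomial.C (x j)) : ℝ[X]).Monic :=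
      monic_prod_of_monic _ _ fun j _ => monic_X_sub_C _
    have hm2 : (∏ j, (Polynomial.X - Polynomial.C (x j + q)) : ℝ[X]).Monic :=
      monic_prod_of_monic _ _ fun j _ => monic_X_sub_C _
    have hsub : ((∏ j, (Polynomial.X - Polynomial.C (x j))) - (∏ j, (Polynomial.X - Polynomial.C (x j + q))) : ℝ[X]).degree
        < (N : ℕ) := by
      have := Polynomial.degree_sub_lt (hdeg1.trans hdeg2.symm) hm1.ne_zero
        (hm1.leadingCoeff.trans hm2.leadingCoeff.symm)
      rwa [hdeg1] at this
    have hterm : ∀ i : Fin N,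
        (Polynomial.C (c i) * ∏ j ∈ Finset.univ.erase i, (Polynomial.X - Polynomial.C (x j)) : ℝ[X]).degree
          ≤ ((N - 1 : ℕ) : WithBot ℕ) := by
      intro i
      refine le_trans (degree_mul_le _ _) ?_
      have hd : (∏ j ∈ Finset.univ.erase i, (Polynomial.X - Polynomial.C (x j)) : ℝ[X]).degree
          = ((N - 1 : ℕ) : WithBot ℕ) := by
        rw [degree_prod]
        simp [degree_X_sub_C, Finset.card_erase_of_mem]
      calc (Polynomial.C (c i)).degree +
            (∏ j ∈ Finset.univ.erase i, (Polynomial.X - Polynomial.C (x j)) : ℝ[X]).degree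
          ≤ 0 + ((N - 1 : ℕ) : WithBot ℕ) := add_le_add degree_C_le hd.le
        _ = ((N - 1 : ℕ) : WithBot ℕ) := zero_add _
    have hsum : (Polynomial.C q * ∑ i, Polynomial.C (c i) *
        ∏ j ∈ Finset.univ.erase i, (Polynomial.X - Polynomial.C (x j)) : ℝ[X]).degree < (N : ℕ) := by
      refine lt_of_le_of_lt (degree_mul_le _ _) ?_
      have h1 : (∑ i, Polynomial.C (c i) *
          ∏ j ∈ Finset.univ.erase i, (Polynomial.X - Polynomial.C (x j)) : ℝ[X]).degree
            ≤ ((N - 1 : ℕ) : WithBot ℕ) :=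
        le_trans (degree_sum_le _ _) (Finset.sup_le fun i _ => hterm i)
      have h2 : ((N - 1 : ℕ) : WithBot ℕ) < (N : ℕ) := Nat.cast_lt.mpr (Nat.sub_lt hN Nat.one_pos)
      calc (Polynomial.C q).degree + _ ≤ 0 + ((N - 1 : ℕ) : WithBot ℕ) := add_le_add degree_C_le h1
        _ = ((N - 1 : ℕ) : WithBot ℕ) := zero_add _
        _ < (N : ℕ) := h2
    have hdeg : P.degree < (N : ℕ) :=
      lt_of_le_of_lt (degree_sub_le _ _) (max_lt hsub hsum)
    have hnat : P.natDegree < N := by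
      have := (Polynomial.natDegree_lt_iff_degree_lt hz).mpr hdeg
      exact_mod_cast this
    exact hz (Polynomial.eq_zero_of_natDegree_lt_card_of_eval_eq_zero P hx hPeval
      (by simpa using hnat))
  have heq := congrArg (Polynomial.eval t) hP0
  simp only [hP, eval_sub, eval_mul, eval_C, eval_prod, eval_finset_sum, eval_X, eval_zero,
    sub_add_eq_sub_sub] at heq
  show (∏ j, (t - x j)) - ∏ j, (t - x j - q) = q * ∑ i, c i * ∏ j ∈ Finset.univ.erase i, (t - x j)
  linarith [heq]

open Polynomial in
lemma key2 (N : ℕ) (x : Fin N → ℝ) (hx : Function.Injective x) (q : ℝ) (z : ℝ) :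
    (∏ j, (1 - x j * z)) - ∏ j, (1 - (x j + q) * z) =
      q * z * ∑ i, (∏ j ∈ Finset.univ.erase i, (x i - x j - q) / (x i - x j)) *
        ∏ j ∈ Finset.univ.erase i, (1 - x j * z) := by
  rcases Nat.eq_zero_or_pos N with hN | hN
  · subst hN; simp
  rcases eq_or_ne z 0 with hz | hz
  · subst hz; simp
  have key := key1 N x hx q (1 / z)
  have hzn : ∀ a : ℝ, (1 / z - a) * z = 1 - a * z := by
    intro a; field_simp
  have e1 : (∏ j, (1 - x j * z)) = (∏ j, (1 / z - x j)) * z ^ N := by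
    rw [Finset.prod_congr rfl fun j (_ : j ∈ univ) => (hzn (x j)).symm,
      Finset.prod_mul_distrib, Finset.prod_const]
    simp
  have e2 : (∏ j, (1 - (x j + q) * z)) = (∏ j, (1 / z - x j - q)) * z ^ N := by
    have h : ∀ j : Fin N, (1 - (x j + q) * z) = (1 / z - x j - q) * z := by
      intro j; rw [← hzn (x j + q)]; ring
    rw [Finset.prod_congr rfl fun j (_ : j ∈ univ) => h j,
      Finset.prod_mul_distrib, Finset.prod_const]
    simp
  have e3 : ∀ i : Fin N, (∏ j ∈ Finset.univ.erase i, (1 - x j * z))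
      = (∏ j ∈ Finset.univ.erase i, (1 / z - x j)) * z ^ (N - 1) := by
    intro i
    rw [Finset.prod_congr rfl fun j (_ : j ∈ univ.erase i) => (hzn (x j)).symm,
      Finset.prod_mul_distrib, Finset.prod_const]
    simp [Finset.card_erase_of_mem]
  calc (∏ j, (1 - x j * z)) - ∏ j, (1 - (x j + q) * z)
      = ((∏ j, (1 / z - x j)) - ∏ j, (1 / z - x j - q)) * z ^ N := by
        rw [e1, e2, sub_mul]
    _ = q * (∑ i, (∏ j ∈ Finset.univ.erase i, (x i - x j - q) / (x i - x j)) *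
          ∏ j ∈ Finset.univ.erase i, (1 / z - x j)) * z ^ N := by rw [key]
    _ = q * z * ∑ i, (∏ j ∈ Finset.univ.erase i, (x i - x j - q) / (x i - x j)) *
          ∏ j ∈ Finset.univ.erase i, (1 - x j * z) := by
        have hzN : z ^ N = z * z ^ (N - 1) := by
          conv_lhs => rw [← Nat.succ_pred_eq_of_pos hN]
          rw [pow_succ, Nat.pred_eq_sub_one]
          ring
        simp only [e3, ← mul_assoc, ← Finset.sum_mul]
        rw [hzN]
        ring

open Polynomial in
lemma key2poly (N : ℕ) (x : Fin N → ℝ) (hx : Function.Injective x) (q : ℝ) :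
    (∏ j, (1 - Polynomial.C (x j) * Polynomial.X) : ℝ[X]) - ∏ j, (1 - Polynomial.C (x j + q) * Polynomial.X) =
      Polynomial.C q * Polynomial.X * ∑ i, Polynomial.C
          (∏ j ∈ Finset.univ.erase i, (x i - x j - q) / (x i - x j)) *
        ∏ j ∈ Finset.univ.erase i, (1 - Polynomial.C (x j) * Polynomial.X) := by
  apply Polynomial.funext
  intro z
  simp only [eval_sub, eval_mul, eval_prod, eval_finset_sum, eval_one, eval_C, eval_X]
  exact key2 N x hx q z

open Polynomial in
lemma key2PS (N : ℕ) (x : Fin N → ℝ) (hx : Function.Injective x) (q : ℝ) :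
    (∏ j, (1 - PowerSeries.C (x j) * PowerSeries.X) : ℝ⟦X⟧)
        - ∏ j, (1 - PowerSeries.C (x j + q) * PowerSeries.X) =
      PowerSeries.C q * PowerSeries.X * ∑ i, PowerSeries.C
          (∏ j ∈ Finset.univ.erase i, (x i - x j - q) / (x i - x j))
        * ∏ j ∈ Finset.univ.erase i, (1 - PowerSeries.C (x j) * PowerSeries.X) := by
  have h := congrArg (Polynomial.coeToPowerSeries.ringHom (R := ℝ)) (key2poly N x hx q)
  simpa only [map_sub, map_mul, map_prod, map_sum, map_one,
    Polynomial.coeToPowerSeries.ringHom_apply, Polynomial.coe_C, Polynomial.coe_X,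
    Polynomial.coe_one, Polynomial.coe_mul, Polynomial.coe_sub] using h

lemma coeff_pow_eq_zero {f : ℝ⟦X⟧} (hf : constantCoeff f = 0) {n k : ℕ} (h : n < k) :
    coeff n (f ^ k) = 0 := by
  have hdvd : (X : ℝ⟦X⟧) ^ k ∣ f ^ k := pow_dvd_pow_of_dvd (X_dvd_iff.mpr hf) k
  exact X_pow_dvd_iff.mp hdvd n h

lemma coeff_mul_expPS (f : ℝ⟦X⟧) (hf : constantCoeff f = 0) (g : ℝ⟦X⟧) (n : ℕ) :
    coeff n (g * expPS f) = ∑ k ∈ Finset.range (n + 1),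
      coeff n (g * f ^ k) / (Nat.factorial k : ℝ) := by
  rw [PowerSeries.coeff_mul]
  have step1 : ∀ p ∈ Finset.HasAntidiagonal.antidiagonal n, coeff p.1 g * coeff p.2 (expPS f)
      = ∑ k ∈ Finset.range (n + 1),
          coeff p.1 g * coeff p.2 (f ^ k) / (Nat.factorial k : ℝ) := by
    intro p hp
    have hp2 : p.2 ≤ n := by have := Finset.HasAntidiagonal.mem_antidiagonal.mp hp; omega
    rw [expPS, coeff_mk, Finset.mul_sum]
    rw [Finset.sum_subset (Finset.range_subset_range.mpr (by omega : p.2 + 1 ≤ n + 1))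
      (fun k hk1 hk2 => ?_)]
    · exact Finset.sum_congr rfl fun k _ => by ring
    · have hlt : p.2 < k := by
        simp only [Finset.mem_range] at hk1 hk2
        omega
      rw [coeff_pow_eq_zero hf hlt]
      simp
  rw [Finset.sum_congr rfl step1, Finset.sum_comm]
  refine Finset.sum_congr rfl fun k _ => ?_
  rw [PowerSeries.coeff_mul, Finset.sum_div]

lemma constantCoeff_expPS (f : ℝ⟦X⟧) : constantCoeff (expPS f) = 1 := by
  rw [← coeff_zero_eq_constantCoeff_apply, expPS, coeff_mk]
  simp

lemma expPS_zero : expPS 0 = 1 := by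
  ext n
  rw [expPS, coeff_mk, Finset.sum_eq_single 0]
  · simp
  · intro k _ hk
    rw [zero_pow hk]
    simp
  · intro h
    exact absurd (Finset.mem_range.mpr (by omega)) h

lemma D_expPS (f : ℝ⟦X⟧) (hf : constantCoeff f = 0) :
    d⁄dX ℝ (expPS f) = d⁄dX ℝ f * expPS f := by
  ext n
  rw [PowerSeries.coeff_derivative, coeff_mul_expPS f hf]
  have e : ∀ k : ℕ, coeff n (d⁄dX ℝ f * f ^ k)
      = coeff (n + 1) (f ^ (k + 1)) * ((n : ℝ) + 1) / ((k : ℝ) + 1) := by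
    intro k
    have h := congrArg (coeff n) (Derivation.leibniz_pow (d⁄dX ℝ) (a := f) (k + 1))
    rw [PowerSeries.coeff_derivative] at h
    simp only [Nat.add_sub_cancel, smul_eq_mul] at h
    rw [map_nsmul] at h
    simp only [nsmul_eq_mul] at h
    push_cast at h
    have h1 : ((k : ℝ) + 1) ≠ 0 := by positivity
    rw [mul_comm (d⁄dX ℝ f) (f ^ k)]
    rw [h]
    push_cast
    field_simp
  have rhs_eq : ∑ k ∈ Finset.range (n + 1),
        coeff n (d⁄dX ℝ f * f ^ k) / (Nat.factorial k : ℝ)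
      = ∑ k ∈ Finset.range (n + 1),
        coeff (n + 1) (f ^ (k + 1)) * ((n : ℝ) + 1) / (Nat.factorial (k + 1) : ℝ) := by
    refine Finset.sum_congr rfl fun k _ => ?_
    rw [e k, div_div, Nat.factorial_succ]
    push_cast
    ring_nf
  rw [rhs_eq, expPS, coeff_mk,
    Finset.sum_range_succ' (fun k => coeff (n + 1) (f ^ k) / (Nat.factorial k : ℝ)) (n + 1)]
  simp only [pow_zero, PowerSeries.coeff_one, Nat.succ_ne_zero, if_false, Nat.factorial_zero,
    Nat.cast_one, zero_div, add_zero, Finset.sum_mul]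
  refine Finset.sum_congr rfl fun k _ => ?_
  ring

lemma ODE_unique (h F G : ℝ⟦X⟧) (h0 : constantCoeff F = constantCoeff G)
    (hF : d⁄dX ℝ F = h * F) (hG : d⁄dX ℝ G = h * G) : F = G := by
  ext n
  induction n using Nat.strong_induction_on with
  | _ n ih =>
    match n with
    | 0 => simpa using h0
    | Nat.succ m =>
      have e1 : coeff m (h * F) = coeff m (h * G) := by
        rw [PowerSeries.coeff_mul, PowerSeries.coeff_mul]
        refine Finset.sum_congr rfl fun p hp => ?_
        rw [ih p.2 (by have := Finset.HasAntidiagonal.mem_antidiagonal.mp hp; omega)]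
      have e2 := congrArg (coeff m) hF
      have e3 := congrArg (coeff m) hG
      rw [PowerSeries.coeff_derivative] at e2 e3
      have e4 : coeff (m + 1) F * ((m : ℝ) + 1) = coeff (m + 1) G * ((m : ℝ) + 1) := by
        rw [e2, e3, e1]
      have hm : ((m : ℝ) + 1) ≠ 0 := by positivity
      exact mul_right_cancel₀ hm e4

lemma expPS_add (f g : ℝ⟦X⟧) (hf : constantCoeff f = 0) (hg : constantCoeff g = 0) :
    expPS (f + g) = expPS f * expPS g := by
  refine ODE_unique (d⁄dX ℝ (f + g)) _ _ ?_ ?_ ?_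
  · rw [constantCoeff_expPS, map_mul, constantCoeff_expPS, constantCoeff_expPS, one_mul]
  · exact D_expPS _ (by rw [map_add, hf, hg, add_zero])
  · have : d⁄dX ℝ (expPS f * expPS g)
        = expPS f * d⁄dX ℝ (expPS g) + expPS g * d⁄dX ℝ (expPS f) := by
      have := Derivation.leibniz (d⁄dX ℝ) (expPS f) (expPS g)
      simpa [smul_eq_mul] using this
    rw [this, D_expPS f hf, D_expPS g hg, map_add]
    ring

lemma expPS_sum {ι : Type*} (s : Finset ι) (h : ι → ℝ⟦X⟧)
    (hh : ∀ i ∈ s, constantCoeff (h i) = 0) :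
    expPS (∑ i ∈ s, h i) = ∏ i ∈ s, expPS (h i) := by
  induction s using Finset.cons_induction with
  | empty => simpa using expPS_zero
  | cons i s his ih =>
    rw [Finset.sum_cons, Finset.prod_cons,
      expPS_add _ _ (hh i (Finset.mem_cons_self i s))
        (by rw [map_sum]; exact Finset.sum_eq_zero fun j hj => hh j (Finset.mem_cons_of_mem hj)),
      ih fun j hj => hh j (Finset.mem_cons_of_mem hj)]

/-- geometric series -/
noncomputable def geo (a : ℝ) : ℝ⟦X⟧ := PowerSeries.mk fun n => a ^ n

/-- formal `-log(1-aX)` -/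
noncomputable def lg (a : ℝ) : ℝ⟦X⟧ :=
  PowerSeries.mk fun n => if n = 0 then 0 else a ^ n / (n : ℝ)

lemma geo_unit (a : ℝ) : (1 - PowerSeries.C a * X) * geo a = 1 := by
  ext n
  rw [sub_mul, one_mul, map_sub, mul_assoc]
  cases n with
  | zero => simp [geo, coeff_mk]
  | succ m =>
    rw [PowerSeries.coeff_C_mul, PowerSeries.coeff_succ_X_mul]
    simp [geo, coeff_mk, PowerSeries.coeff_one, pow_succ]
    ring

lemma D_geo (a : ℝ) : d⁄dX ℝ (geo a) = (PowerSeries.C a * geo a) * geo a := by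
  ext n
  rw [PowerSeries.coeff_derivative, mul_assoc, PowerSeries.coeff_C_mul, PowerSeries.coeff_mul]
  have : ∀ p ∈ Finset.HasAntidiagonal.antidiagonal n, coeff p.1 (geo a) * coeff p.2 (geo a) = a ^ n := by
    intro p hp
    rw [geo, coeff_mk, coeff_mk, ← pow_add, Finset.HasAntidiagonal.mem_antidiagonal.mp hp]
  rw [Finset.sum_congr rfl this, Finset.sum_const, Finset.Nat.card_antidiagonal]
  simp [geo, coeff_mk, pow_succ]
  ring

lemma constantCoeff_lg (a : ℝ) : constantCoeff (lg a) = 0 := by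
  rw [← coeff_zero_eq_constantCoeff_apply, lg, coeff_mk]
  simp

lemma D_lg (a : ℝ) : d⁄dX ℝ (lg a) = PowerSeries.C a * geo a := by
  ext n
  rw [PowerSeries.coeff_derivative, PowerSeries.coeff_C_mul, lg, geo, coeff_mk, coeff_mk]
  have hn : ((n : ℝ) + 1) ≠ 0 := by positivity
  rw [if_neg (Nat.succ_ne_zero n)]
  push_cast
  field_simp
  ring

lemma expPS_lg (a : ℝ) : expPS (lg a) = geo a := by
  refine ODE_unique (PowerSeries.C a * geo a) _ _ ?_ ?_ (D_geo a)
  · rw [constantCoeff_expPS, ← coeff_zero_eq_constantCoeff_apply, geo, coeff_mk, pow_zero]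
  · rw [D_expPS _ (constantCoeff_lg a), D_lg]

/-- Generating function of `m_k^{(q)}` in terms of power sums:
`Σ_{k≥0} m_k^{(q)}(x) z^{k+1}
  = 1/q - (1/q)·exp( Σ_{k≥1} (p_k(x) - p_k(x+q)) z^k / k )`. -/
theorem qPP_generating_function_powersums (N : ℕ) (x : Fin N → ℝ)
    (hx : Function.Injective x) (q : ℝ) (hq : q ≠ 0) :
    (PowerSeries.mk fun n => if n = 0 then 0 else
      ∑ i, (∏ j ∈ Finset.univ.erase i, (x i - x j - q) / (x i - x j)) * x i ^ (n - 1)) =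
    PowerSeries.C (1 / q) - PowerSeries.C (1 / q) *
      expPS (PowerSeries.mk fun k => if k = 0 then 0 else
        ((∑ i, x i ^ k) - ∑ i, (x i + q) ^ k) / (k : ℝ)) := by
  classical
  set c : Fin N → ℝ := fun i => ∏ j ∈ Finset.univ.erase i, (x i - x j - q) / (x i - x j) with hc
  set f : ℝ⟦X⟧ := PowerSeries.mk fun k => if k = 0 then 0 else
      ((∑ i, x i ^ k) - ∑ i, (x i + q) ^ k) / (k : ℝ) with hf
  set L : ℝ⟦X⟧ := PowerSeries.mk fun n => if n = 0 then 0 else ∑ i, c i * x i ^ (n - 1) with hL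
  -- Step 1: f + ∑ lg (x i + q) = ∑ lg (x i)
  have step1 : f + ∑ i, lg (x i + q) = ∑ i, lg (x i) := by
    ext n
    rw [map_add, hf, coeff_mk, map_sum, map_sum]
    simp only [lg, coeff_mk]
    rcases eq_or_ne n 0 with hn | hn
    · simp [hn]
    · rw [if_neg hn]
      simp only [if_neg hn]
      rw [← Finset.sum_div, ← Finset.sum_div]
      ring
  -- Step 2: expPS f * ∏ geo (x i + q) = ∏ geo (x i)
  have hcf : constantCoeff f = 0 := by
    rw [hf, ← coeff_zero_eq_constantCoeff_apply, coeff_mk]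
    simp
  have step2 : expPS f * ∏ i, geo (x i + q) = ∏ i, geo (x i) := by
    have h1 : ∏ i, geo (x i + q) = expPS (∑ i, lg (x i + q)) := by
      rw [expPS_sum _ _ fun i _ => constantCoeff_lg _]
      exact Finset.prod_congr rfl fun i _ => (expPS_lg _).symm
    have h2 : ∏ i, geo (x i) = expPS (∑ i, lg (x i)) := by
      rw [expPS_sum _ _ fun i _ => constantCoeff_lg _]
      exact Finset.prod_congr rfl fun i _ => (expPS_lg _).symm
    have hsum0 : constantCoeff (∑ i, lg (x i + q)) = 0 := by
      rw [map_sum]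
      exact Finset.sum_eq_zero fun i _ => constantCoeff_lg _
    rw [h1, h2, ← expPS_add f _ hcf hsum0, step1]
  -- notation
  set A : ℝ⟦X⟧ := ∏ i, (1 - PowerSeries.C (x i) * X) with hA
  set Av : ℝ⟦X⟧ := ∏ i, (1 - PowerSeries.C (x i + q) * X) with hAv
  set GA : ℝ⟦X⟧ := ∏ i, geo (x i) with hGA
  set GAv : ℝ⟦X⟧ := ∏ i, geo (x i + q) with hGAv
  set E : ℝ⟦X⟧ := expPS f with hE
  have hAGA : A * GA = 1 := by
    rw [hA, hGA, ← Finset.prod_mul_distrib]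
    exact Finset.prod_eq_one fun i _ => geo_unit (x i)
  have hAGAv : Av * GAv = 1 := by
    rw [hAv, hGAv, ← Finset.prod_mul_distrib]
    exact Finset.prod_eq_one fun i _ => geo_unit (x i + q)
  have hEeq : E = GA * Av := by
    calc E = E * (GAv * Av) := by rw [mul_comm GAv Av, hAGAv, mul_one]
      _ = (E * GAv) * Av := by ring
      _ = GA * Av := by rw [hE, hGAv, hGA, step2]
  have h1mE : 1 - E = (A - Av) * GA := by
    calc 1 - E = A * GA - GA * Av := by rw [hAGA, hEeq]
      _ = (A - Av) * GA := by ring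
  -- the L series
  have step3 : L = ∑ i, PowerSeries.C (c i) * (X * geo (x i)) := by
    ext n
    rw [hL, coeff_mk, map_sum]
    cases n with
    | zero =>
      simp [geo]
    | succ m =>
      rw [if_neg (Nat.succ_ne_zero m)]
      refine Finset.sum_congr rfl fun i _ => ?_
      rw [PowerSeries.coeff_C_mul, PowerSeries.coeff_succ_X_mul, geo, coeff_mk,
        Nat.succ_sub_one]
  -- the key identity
  have hkey : PowerSeries.C q * L = 1 - E := by
    have hmul : (PowerSeries.C q * L) * A = (1 - E) * A := by
      have hrhs : (1 - E) * A = A - Av := by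
        rw [h1mE, mul_assoc, mul_comm GA A, hAGA, mul_one]
      have hgeoA : ∀ i : Fin N, geo (x i) * A
          = ∏ j ∈ Finset.univ.erase i, (1 - PowerSeries.C (x j) * X) := by
        intro i
        rw [hA, ← Finset.mul_prod_erase _ _ (Finset.mem_univ i), ← mul_assoc,
          mul_comm (geo (x i)), geo_unit, one_mul]
      have hlhs : (PowerSeries.C q * L) * A = A - Av := by
        rw [step3, Finset.mul_sum, Finset.sum_mul]
        have : ∀ i : Fin N, PowerSeries.C q * (PowerSeries.C (c i) * (X * geo (x i))) * A
            = PowerSeries.C q * X * (PowerSeries.C (c i) *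
                ∏ j ∈ Finset.univ.erase i, (1 - PowerSeries.C (x j) * X)) := by
          intro i
          rw [← hgeoA i]
          ring
        rw [Finset.sum_congr rfl fun i _ => this i, ← Finset.mul_sum, hA, hAv, key2PS N x hx q]
      rw [hrhs, hlhs]
    have := congrArg (· * GA) hmul
    simpa only [mul_assoc, hAGA, mul_one] using this
  have hfinal : L = PowerSeries.C (1 / q) * (1 - E) := by
    rw [← hkey, ← mul_assoc, ← map_mul, one_div, inv_mul_cancel₀ hq, map_one, one_mul]
  rw [hfinal, mul_sub, mul_one]
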